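/- The map sending an alternating-sign matrix A = (a_{i,j})_{i,j=1}^n to its corner-sum matrix C = (c_{i,j})_{i,j=0}^n, where c_{i,j} = Σ_{i'≤i, j'≤j} a_{i',j'}, is a bijection from the set of ASMs of order n onto the set of (n+1)-by-(n+1) integer matrices (c_{i,j})_{i,j=0}^n whose first row and first column are all 0, whose last row and last column are 0,1,...,n in order, and in which each entry is equal to or one more than the preceding entry in its row and in its column. -/

import Mathlib

/-- An alternating-sign matrix of order `n`: entries in `{-1,0,1}`, all partial sums of
each row and each column (from the start) are `0` or `1`, and every row and column sums
to `1`.  This is equivalent to the condition that in each row and column the nonzero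
entries alternate in sign, beginning and ending with `+1`. -/
def IsASM {n : ℕ} (A : Matrix (Fin n) (Fin n) ℤ) : Prop :=
  (∀ i j, A i j = -1 ∨ A i j = 0 ∨ A i j = 1) ∧
  (∀ i j, ∑ j' ∈ Finset.univ.filter (fun j' => j' ≤ j), A i j' = 0 ∨
          ∑ j' ∈ Finset.univ.filter (fun j' => j' ≤ j), A i j' = 1) ∧
  (∀ i j, ∑ i' ∈ Finset.univ.filter (fun i' => i' ≤ i), A i' j = 0 ∨
          ∑ i' ∈ Finset.univ.filter (fun i' => i' ≤ i), A i' j = 1) ∧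
  (∀ i, ∑ j, A i j = 1) ∧
  (∀ j, ∑ i, A i j = 1)

/-- The corner-sum matrix of an `n × n` matrix: `c i j = ∑_{i' < i, j' < j} A i' j'`. -/
def cornerSum {n : ℕ} (A : Matrix (Fin n) (Fin n) ℤ) :
    Matrix (Fin (n + 1)) (Fin (n + 1)) ℤ :=
  fun i j =>
    ∑ p ∈ Finset.univ.filter (fun p : Fin n × Fin n => (p.1 : ℕ) < i ∧ (p.2 : ℕ) < j),
      A p.1 p.2

/-- A corner-sum matrix of order `n`: first row and first column all `0`, last row and
last column `0,1,…,n` in order, and each entry is equal to or one more than the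
preceding entry in its row and in its column. -/
def IsCSM {n : ℕ} (C : Matrix (Fin (n + 1)) (Fin (n + 1)) ℤ) : Prop :=
  (∀ j, C 0 j = 0) ∧
  (∀ i, C i 0 = 0) ∧
  (∀ j, C (Fin.last n) j = (j : ℤ)) ∧
  (∀ i, C i (Fin.last n) = (i : ℤ)) ∧
  (∀ (i : Fin n) (j : Fin (n + 1)),
    C i.succ j = C i.castSucc j ∨ C i.succ j = C i.castSucc j + 1) ∧
  (∀ (i : Fin (n + 1)) (j : Fin n),
    C i j.succ = C i j.castSucc ∨ C i j.succ = C i j.castSucc + 1)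

open Finset

lemma myFilter_lt_succ {n : ℕ} (i : Fin n) :
    (univ.filter (fun i' : Fin n => (i' : ℕ) < ((i.succ : Fin (n+1)) : ℕ))) =
      insert i (univ.filter (fun i' : Fin n => (i' : ℕ) < ((i.castSucc : Fin (n+1)) : ℕ))) := by
  ext x
  simp [Fin.ext_iff]
  omega

lemma myFilter_lt_last {n : ℕ} :
    (univ.filter (fun i' : Fin n => (i' : ℕ) < ((Fin.last n) : ℕ))) = univ := by
  ext x; simp [x.is_lt]

lemma myFilter_le_eq {n : ℕ} (j : Fin n) :
    (univ.filter (fun j' : Fin n => j' ≤ j)) =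
      (univ.filter (fun j' : Fin n => (j' : ℕ) < ((j.succ : Fin (n+1)) : ℕ))) := by
  ext x
  simp only [mem_filter, mem_univ, true_and, Fin.le_def, Fin.val_succ]
  omega

lemma myTele {n : ℕ} (g : Fin (n+1) → ℤ) (i : Fin (n+1)) :
    ∑ i' ∈ univ.filter (fun i' : Fin n => (i' : ℕ) < (i : ℕ)), (g i'.succ - g i'.castSucc)
      = g i - g 0 := by
  induction i using Fin.induction with
  | zero => simp
  | succ i ih =>
    rw [myFilter_lt_succ, sum_insert (by simp), ih]
    ring

lemma myCornerSum_eq {n : ℕ} (A : Matrix (Fin n) (Fin n) ℤ) (i j : Fin (n+1)) :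
    cornerSum A i j = ∑ i' ∈ univ.filter (fun i' : Fin n => (i' : ℕ) < (i : ℕ)),
      ∑ j' ∈ univ.filter (fun j' : Fin n => (j' : ℕ) < (j : ℕ)), A i' j' := by
  unfold cornerSum
  refine Eq.trans ?_ (Finset.sum_product' _ _ (fun a b => A a b))
  refine Finset.sum_congr ?_ (fun _ _ => rfl)
  ext p
  simp

lemma myRowdiff {n : ℕ} (A : Matrix (Fin n) (Fin n) ℤ) (i : Fin n) (j : Fin (n+1)) :
    cornerSum A i.succ j - cornerSum A i.castSucc j
      = ∑ j' ∈ univ.filter (fun j' : Fin n => (j' : ℕ) < (j : ℕ)), A i j' := by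
  rw [myCornerSum_eq, myCornerSum_eq, myFilter_lt_succ, sum_insert (by simp)]
  ring

lemma myColdiff {n : ℕ} (A : Matrix (Fin n) (Fin n) ℤ) (i : Fin (n+1)) (j : Fin n) :
    cornerSum A i j.succ - cornerSum A i j.castSucc
      = ∑ i' ∈ univ.filter (fun i' : Fin n => (i' : ℕ) < (i : ℕ)), A i' j := by
  rw [myCornerSum_eq, myCornerSum_eq, ← Finset.sum_sub_distrib]
  refine Finset.sum_congr rfl fun i' _ => ?_
  rw [myFilter_lt_succ, sum_insert (by simp)]
  ring

-- entry recovery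
lemma myEntry {n : ℕ} (A : Matrix (Fin n) (Fin n) ℤ) (i j : Fin n) :
    A i j = cornerSum A i.succ j.succ - cornerSum A i.castSucc j.succ
      - cornerSum A i.succ j.castSucc + cornerSum A i.castSucc j.castSucc := by
  have e1 := myRowdiff A i j.succ
  have e2 := myRowdiff A i j.castSucc
  rw [myFilter_lt_succ, sum_insert (by simp)] at e1
  linarith

/-- The map `A ↦ cornerSum A` is a bijection from the ASMs of order `n` onto the
corner-sum matrices of order `n`. -/
theorem cornerSum_bijOn (n : ℕ) :
    Set.BijOn (cornerSum (n := n))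
      {A | IsASM A} {C | IsCSM C} := by
  refine ⟨?_, ?_, ?_⟩
  · -- MapsTo
    rintro A ⟨h1, h2, h3, h4, h5⟩
    have hrow : ∀ (i : Fin n) (j : Fin (n+1)), cornerSum A i.succ j = cornerSum A i.castSucc j ∨
        cornerSum A i.succ j = cornerSum A i.castSucc j + 1 := by
      intro i j
      have hd := myRowdiff A i j
      have hs : (∑ j' ∈ univ.filter (fun j' : Fin n => (j' : ℕ) < (j : ℕ)), A i j') = 0 ∨
          (∑ j' ∈ univ.filter (fun j' : Fin n => (j' : ℕ) < (j : ℕ)), A i j') = 1 := by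
        induction j using Fin.cases with
        | zero => left; simp
        | succ j0 => rw [← myFilter_le_eq]; exact h2 i j0
      omega
    have hcol : ∀ (i : Fin (n+1)) (j : Fin n), cornerSum A i j.succ = cornerSum A i j.castSucc ∨
        cornerSum A i j.succ = cornerSum A i j.castSucc + 1 := by
      intro i j
      have hd := myColdiff A i j
      have hs : (∑ i' ∈ univ.filter (fun i' : Fin n => (i' : ℕ) < (i : ℕ)), A i' j) = 0 ∨
          (∑ i' ∈ univ.filter (fun i' : Fin n => (i' : ℕ) < (i : ℕ)), A i' j) = 1 := by
        induction i using Fin.cases with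
        | zero => left; simp
        | succ i0 => rw [← myFilter_le_eq]; exact h3 i0 j
      omega
    refine ⟨?_, ?_, ?_, ?_, hrow, hcol⟩
    · intro j; rw [myCornerSum_eq]; simp
    · intro i; rw [myCornerSum_eq]; simp
    · intro j
      induction j using Fin.induction with
      | zero => rw [myCornerSum_eq]; simp
      | succ j ih =>
        have hd := myColdiff A (Fin.last n) j
        rw [myFilter_lt_last] at hd
        have : ((j.succ : Fin (n+1)) : ℤ) = ((j.castSucc : Fin (n+1)) : ℤ) + 1 := by
          simp [Fin.val_succ]
        rw [this, ← ih]
        have := h5 j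
        linarith
    · intro i
      induction i using Fin.induction with
      | zero => rw [myCornerSum_eq]; simp
      | succ i ih =>
        have hd := myRowdiff A i (Fin.last n)
        rw [myFilter_lt_last] at hd
        have : ((i.succ : Fin (n+1)) : ℤ) = ((i.castSucc : Fin (n+1)) : ℤ) + 1 := by
          simp [Fin.val_succ]
        rw [this, ← ih]
        have := h4 i
        linarith
  · -- InjOn
    rintro A _ B _ h
    ext i j
    rw [myEntry A i j, myEntry B i j, h]
  · -- SurjOn
    rintro C ⟨hc1, hc2, hc3, hc4, hc5, hc6⟩
    set A : Matrix (Fin n) (Fin n) ℤ := fun i j =>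
      C i.succ j.succ - C i.castSucc j.succ - C i.succ j.castSucc + C i.castSucc j.castSucc
      with hAdef
    have hCA : cornerSum A = C := by
      ext i j
      rw [myCornerSum_eq]
      have inner : ∀ i' : Fin n,
          (∑ j' ∈ univ.filter (fun j' : Fin n => (j' : ℕ) < (j : ℕ)), A i' j')
            = C i'.succ j - C i'.castSucc j := by
        intro i'
        have ht := myTele (fun x => C i'.succ x - C i'.castSucc x) j
        have : (∑ j' ∈ univ.filter (fun j' : Fin n => (j' : ℕ) < (j : ℕ)), A i' j')
            = ∑ j' ∈ univ.filter (fun j' : Fin n => (j' : ℕ) < (j : ℕ)),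
              ((fun x => C i'.succ x - C i'.castSucc x) j'.succ
                - (fun x => C i'.succ x - C i'.castSucc x) j'.castSucc) := by
          refine Finset.sum_congr rfl fun j' _ => ?_
          simp only [hAdef]
          ring
        rw [this, ht]
        simp [hc2]
      rw [Finset.sum_congr rfl (fun i' _ => inner i')]
      have ht := myTele (fun x => C x j) i
      rw [ht, hc1 j]
      ring
    refine ⟨A, ?_, hCA⟩
    have hrowsum : ∀ (i : Fin n) (j : Fin (n+1)),
        (∑ j' ∈ univ.filter (fun j' : Fin n => (j' : ℕ) < (j : ℕ)), A i j')
          = C i.succ j - C i.castSucc j := by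
      intro i j
      have := myRowdiff A i j
      rw [hCA] at this
      omega
    have hcolsum : ∀ (i : Fin (n+1)) (j : Fin n),
        (∑ i' ∈ univ.filter (fun i' : Fin n => (i' : ℕ) < (i : ℕ)), A i' j)
          = C i j.succ - C i j.castSucc := by
      intro i j
      have := myColdiff A i j
      rw [hCA] at this
      omega
    refine ⟨?_, ?_, ?_, ?_, ?_⟩
    · intro i j
      have d1 := hc6 i.succ j
      have d2 := hc6 i.castSucc j
      simp only [hAdef]
      omega
    · intro i j
      rw [myFilter_le_eq, hrowsum i j.succ]
      have := hc5 i j.succ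
      omega
    · intro i j
      rw [myFilter_le_eq, hcolsum i.succ j]
      have := hc6 i.succ j
      omega
    · intro i
      have h := hrowsum i (Fin.last n)
      rw [myFilter_lt_last] at h
      rw [h, hc4 i.succ, hc4 i.castSucc]
      simp [Fin.val_succ]
    · intro j
      have h := hcolsum (Fin.last n) j
      rw [myFilter_lt_last] at h
      rw [h, hc3 j.succ, hc3 j.castSucc]
      simp [Fin.val_succ]
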